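/- Suppose every row constraint a_i·x ≥ 1 (with nonnegative coefficients) of an unbounded covering integer program is ρ-roundable, and x* is a nonnegative real vector with A x* ≥ 1 componentwise. Then ⌊ρ x*⌋ is a nonnegative integer vector with A⌊ρ x*⌋ ≥ 1, and c·⌊ρ x*⌋ ≤ ρ (c·x*) for any nonnegative cost vector c. -/
import Mathlib


theorem stmt_10 (m n : ℕ) (A : Fin m → Fin n → ℝ) (c xs : Fin n → ℝ) (ρ : ℝ)
    (hA : ∀ i j, 0 ≤ A i j) (hc : ∀ j, 0 ≤ c j) (hx : ∀ j, 0 ≤ xs j)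
    (hρ : 1 < ρ)
    (hfeas : ∀ i, 1 ≤ ∑ j, A i j * xs j)
    (hround : ∀ i, ∀ x : Fin n → ℝ, (∀ j, 0 ≤ x j) → 1 ≤ ∑ j, A i j * x j →
      1 ≤ ∑ j, A i j * (⌊ρ * x j⌋ : ℝ)) :
    (∀ j, 0 ≤ ⌊ρ * xs j⌋) ∧
    (∀ i, 1 ≤ ∑ j, A i j * (⌊ρ * xs j⌋ : ℝ)) ∧
    (∑ j, c j * (⌊ρ * xs j⌋ : ℝ)) ≤ ρ * ∑ j, c j * xs j := by
  refine ⟨fun j => Int.floor_nonneg.2 (mul_nonneg (by linarith) (hx j)),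
    fun i => hround i xs hx (hfeas i), ?_⟩
  rw [Finset.mul_sum]
  refine Finset.sum_le_sum fun j _ => ?_
  have := Int.floor_le (ρ * xs j)
  have := hc j
  nlinarith
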